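/- arXiv:2605.06019 — 4 statements merged into one kernel-verified Lean document; each statement's English description precedes it below -/
import Mathlib

section
/- Let Φ, Ψ : Mₘ(ℂ) → Mₙ(ℂ) be completely positive maps with Choi matrices C_Φ and C_Ψ. A linear map Θ : Mₘ(ℂ) → Mₙ(ℂ) satisfies that the block map x ↦ [[Φ(x), Θ(x)],[Θ(x), Ψ(x)]] is completely positive if and only if the block matrix [[C_Φ, C_Θ],[C_Θ, C_Ψ]] is positive semidefinite. Consequently, the Choi matrix of the geometric mean Φ # Ψ equals the matrix geometric mean C_Φ # C_Ψ. -/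
open scoped ComplexOrder

/-- A linear map `Φ : M_m(ℂ) → M_n(ℂ)` is completely positive if for every `k`, the
amplification `id_{M_k} ⊗ Φ` maps positive semidefinite matrices to positive
semidefinite matrices. -/
def IsCP {m n : Type*} [Fintype m] [Fintype n]
    (Φ : Matrix m m ℂ →ₗ[ℂ] Matrix n n ℂ) : Prop :=
  ∀ (k : ℕ) (M : Matrix (Fin k × m) (Fin k × m) ℂ), M.PosSemidef →
    (Matrix.of fun p q : Fin k × n =>
      Φ (Matrix.of fun x y => M (p.1, x) (q.1, y)) p.2 q.2).PosSemidef

/-- The Choi matrix `C_Φ = Σ_{i,j} e_{ij} ⊗ Φ(e_{ij})` of a linear map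
`Φ : M_m(ℂ) → M_n(ℂ)`. -/
noncomputable def choi {m n : Type*} [Fintype m] [DecidableEq m] [Fintype n]
    (Φ : Matrix m m ℂ →ₗ[ℂ] Matrix n n ℂ) : Matrix (m × n) (m × n) ℂ :=
  ∑ i : m, ∑ j : m,
    Matrix.kroneckerMap (· * ·) (Matrix.single i j 1) (Φ (Matrix.single i j 1))

/-- The block map `x ↦ [[Φ(x), Θ(x)],[Θ(x), Ψ(x)]] : M_m(ℂ) → M₂(M_n(ℂ))`. -/
noncomputable def blockMap {m n : Type*} [Fintype m] [Fintype n]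
    (Φ Θ Ψ : Matrix m m ℂ →ₗ[ℂ] Matrix n n ℂ) :
    Matrix m m ℂ →ₗ[ℂ] Matrix (n ⊕ n) (n ⊕ n) ℂ where
  toFun x := Matrix.fromBlocks (Φ x) (Θ x) (Θ x) (Ψ x)
  map_add' x y := by
    ext (i | i) (j | j) <;> simp [Matrix.fromBlocks]
  map_smul' c x := by
    ext (i | i) (j | j) <;> simp [Matrix.fromBlocks]

/-- `G` is the matrix geometric mean of `A` and `B`: the maximum positive semidefinite
`X` with `[[A, X],[X, B]] ≥ 0`. -/
def IsGeomMean {N : Type*} [Fintype N] (A B G : Matrix N N ℂ) : Prop :=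
  G.PosSemidef ∧ (Matrix.fromBlocks A G G B).PosSemidef ∧
    ∀ X : Matrix N N ℂ, X.PosSemidef → (Matrix.fromBlocks A X X B).PosSemidef →
      (G - X).PosSemidef

namespace ChoiAux
open Matrix
variable {m n : Type*} [Fintype m] [DecidableEq m] [Fintype n]

lemma choi_apply (Λ : Matrix m m ℂ →ₗ[ℂ] Matrix n n ℂ) (i j : m) (p q : n) :
    choi Λ (i, p) (j, q) = Λ (Matrix.single i j 1) p q := by
  simp [choi, Matrix.sum_apply, Matrix.single, ite_and]

lemma map_apply_eq_sum (Λ : Matrix m m ℂ →ₗ[ℂ] Matrix n n ℂ) (x : Matrix m m ℂ) (p q : n) :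
    Λ x p q = ∑ i, ∑ j, x i j * choi Λ (i, p) (j, q) := by
  conv_lhs => rw [Matrix.matrix_eq_sum_single x]
  rw [map_sum, Matrix.sum_apply]
  refine Finset.sum_congr rfl fun i _ => ?_
  rw [map_sum, Matrix.sum_apply]
  refine Finset.sum_congr rfl fun j _ => ?_
  rw [choi_apply, ← smul_eq_mul, ← Matrix.smul_apply, ← _root_.map_smul,
    Matrix.smul_single, smul_eq_mul, mul_one]

noncomputable def choiInv (X : Matrix (m × n) (m × n) ℂ) :
    Matrix m m ℂ →ₗ[ℂ] Matrix n n ℂ where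
  toFun x := Matrix.of fun p q => ∑ i, ∑ j, x i j * X (i, p) (j, q)
  map_add' x y := by
    ext p q
    simp [add_mul, Finset.sum_add_distrib]
  map_smul' c x := by
    ext p q
    simp [Finset.mul_sum, mul_assoc]

lemma choi_choiInv (X : Matrix (m × n) (m × n) ℂ) : choi (choiInv X) = X := by
  ext ⟨i, p⟩ ⟨j, q⟩
  rw [choi_apply]
  simp [choiInv, Matrix.single, ite_and]

lemma choi_sub (Λ₁ Λ₂ : Matrix m m ℂ →ₗ[ℂ] Matrix n n ℂ) :
    choi (Λ₁ - Λ₂) = choi Λ₁ - choi Λ₂ := by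
  ext ⟨i, p⟩ ⟨j, q⟩
  simp [choi_apply]

lemma choi_zero : choi (0 : Matrix m m ℂ →ₗ[ℂ] Matrix n n ℂ) = 0 := by
  ext ⟨i, p⟩ ⟨j, q⟩
  simp [choi_apply]

lemma psd_of_cp (Λ : Matrix m m ℂ →ₗ[ℂ] Matrix n n ℂ) (h : IsCP Λ) :
    (choi Λ).PosSemidef := by
  classical
  set k := Fintype.card m with hk
  let e : Fin k ≃ m := (Fintype.equivFin m).symm
  let w : Fin k × m → ℂ := fun x => if x.2 = e x.1 then 1 else 0
  let M : Matrix (Fin k × m) (Fin k × m) ℂ := Matrix.of fun p q => w p * star (w q)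
  have hM : M.PosSemidef := by
    refine Matrix.PosSemidef.of_dotProduct_mulVec_nonneg ?_ ?_
    · ext p q
      simp only [M, Matrix.conjTranspose_apply, Matrix.of_apply, StarMul.star_mul, star_star]
    · intro x
      have : star x ⬝ᵥ (M *ᵥ x)
          = star (∑ r, star (w r) * x r) * (∑ r, star (w r) * x r) := by
        simp only [dotProduct, Matrix.mulVec, Pi.star_apply, M, Matrix.of_apply,
          star_sum, StarMul.star_mul, star_star, Finset.sum_mul, Finset.mul_sum]
        rw [Finset.sum_comm]
        refine Finset.sum_congr rfl fun p _ => Finset.sum_congr rfl fun r _ => by ring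
      rw [this]
      exact star_mul_self_nonneg _
  have hN := h k M hM
  have heq : (Matrix.of fun p q : Fin k × n =>
        Λ (Matrix.of fun x y => M (p.1, x) (q.1, y)) p.2 q.2)
      = (choi Λ).submatrix (e.prodCongr (Equiv.refl n)) (e.prodCongr (Equiv.refl n)) := by
    ext ⟨a, p⟩ ⟨b, q⟩
    have hin : (Matrix.of fun x y : m => M ((a, x) : Fin k × m) (b, y))
        = Matrix.single (e a) (e b) 1 := by
      ext x y
      simp only [M, Matrix.of_apply, w, Matrix.single, ite_and]
      rcases eq_or_ne x (e a) with hx | hx <;> rcases eq_or_ne y (e b) with hy | hy <;>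
        simp [hx, hy, eq_comm]
    simp only [Matrix.of_apply, Matrix.submatrix_apply, Equiv.prodCongr_apply, Prod.map,
      Equiv.refl_apply]
    rw [show (Matrix.of fun x y => M ((a, p).1, x) ((b, q).1, y)) = Matrix.single (e a) (e b) 1 from hin]
    rw [choi_apply]
  rw [heq] at hN
  exact (Matrix.posSemidef_submatrix_equiv (e.prodCongr (Equiv.refl n))).mp hN


open scoped MatrixOrder in
lemma cp_of_psd [DecidableEq n] (Λ : Matrix m m ℂ →ₗ[ℂ] Matrix n n ℂ)
    (h : (choi Λ).PosSemidef) : IsCP Λ := by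
  intro k M hM
  set S : Matrix (m × n) (m × n) ℂ := CFC.sqrt (choi Λ) with hSdef
  have hfac : ∀ (i j : m) (p q : n),
      choi Λ (i, p) (j, q) = ∑ r : m × n, star (S r (i, p)) * S r (j, q) := by
    intro i j p q
    conv_lhs => rw [← CFC.sqrt_mul_sqrt_self (choi Λ) h.nonneg, Matrix.mul_apply]
    exact Finset.sum_congr rfl fun r _ => by
      rw [(CFC.sqrt_nonneg (choi Λ)).posSemidef.1.apply (i, p) r]
  let W : (m × n) → Matrix (Fin k × m) (Fin k × n) ℂ := fun r =>
    Matrix.of fun ai bq => if ai.1 = bq.1 then S r (ai.2, bq.2) else 0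
  have key : (Matrix.of fun p q : Fin k × n =>
        Λ (Matrix.of fun x y => M (p.1, x) (q.1, y)) p.2 q.2)
      = ∑ r : m × n, (W r)ᴴ * M * (W r) := by
    ext ⟨a, p⟩ ⟨b, q⟩
    rw [Matrix.sum_apply, Matrix.of_apply, map_apply_eq_sum]
    have hterm : ∀ r : m × n, ((W r)ᴴ * M * (W r)) (a, p) (b, q)
        = ∑ i : m, ∑ j : m, star (S r (i, p)) * M (a, i) (b, j) * S r (j, q) := by
      intro r
      rw [Matrix.mul_assoc, Matrix.mul_apply, Fintype.sum_prod_type]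
      simp only [Matrix.conjTranspose_apply, Matrix.of_apply, Matrix.mul_apply, W,
        Fintype.sum_prod_type, apply_ite star, star_zero, ite_mul, zero_mul, mul_ite, mul_zero,
        Finset.sum_ite_eq, Finset.sum_ite_eq', Finset.mem_univ, if_true]
      rw [Finset.sum_comm]
      refine Finset.sum_congr rfl fun i _ => ?_
      rw [Finset.sum_ite_eq' Finset.univ a, if_pos (Finset.mem_univ a), Finset.sum_comm]
      simp only [Finset.sum_ite_eq', Finset.mem_univ, if_true]
      rw [Finset.mul_sum]
      refine Finset.sum_congr rfl fun j _ => by ring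
    calc ∑ i, ∑ j, (Matrix.of fun x y => M ((a, p).1, x) ((b, q).1, y)) i j
            * choi Λ (i, (a, p).2) (j, (b, q).2)
        = ∑ i, ∑ j, ∑ r : m × n, star (S r (i, p)) * M (a, i) (b, j) * S r (j, q) := by
          refine Finset.sum_congr rfl fun i _ => Finset.sum_congr rfl fun j _ => ?_
          rw [Matrix.of_apply, hfac, Finset.mul_sum]
          exact Finset.sum_congr rfl fun r _ => by ring
      _ = ∑ i, ∑ r : m × n, ∑ j, star (S r (i, p)) * M (a, i) (b, j) * S r (j, q) :=
          Finset.sum_congr rfl fun i _ => Finset.sum_comm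
      _ = ∑ r : m × n, ∑ i, ∑ j, star (S r (i, p)) * M (a, i) (b, j) * S r (j, q) :=
          Finset.sum_comm
      _ = ∑ r : m × n, ((W r)ᴴ * M * (W r)) (a, p) (b, q) :=
          Finset.sum_congr rfl fun r _ => (hterm r).symm
  rw [key]
  refine Finset.sum_induction _ _ (fun A B hA hB => hA.add hB) Matrix.PosSemidef.zero
    fun r _ => hM.conjTranspose_mul_mul_same (W r)


def blkEquiv (m n : Type*) : (m × n) ⊕ (m × n) ≃ m × (n ⊕ n) where
  toFun x := Sum.elim (fun p => (p.1, Sum.inl p.2)) (fun p => (p.1, Sum.inr p.2)) x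
  invFun y := Sum.elim (fun p => Sum.inl (y.1, p)) (fun p => Sum.inr (y.1, p)) y.2
  left_inv := by rintro (⟨i, p⟩ | ⟨i, p⟩) <;> rfl
  right_inv := by rintro ⟨i, p | p⟩ <;> rfl

lemma blockMap_apply (Φ Θ Ψ : Matrix m m ℂ →ₗ[ℂ] Matrix n n ℂ) (x : Matrix m m ℂ) :
    blockMap Φ Θ Ψ x = Matrix.fromBlocks (Φ x) (Θ x) (Θ x) (Ψ x) := rfl

lemma choi_blockMap (Φ Θ Ψ : Matrix m m ℂ →ₗ[ℂ] Matrix n n ℂ) :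
    Matrix.fromBlocks (choi Φ) (choi Θ) (choi Θ) (choi Ψ)
      = (choi (blockMap Φ Θ Ψ)).submatrix (blkEquiv m n) (blkEquiv m n) := by
  ext (⟨i, p⟩ | ⟨i, p⟩) (⟨j, q⟩ | ⟨j, q⟩) <;>
    simp [choi_apply, blkEquiv, blockMap_apply, Matrix.fromBlocks, Matrix.submatrix_apply]

lemma psd_fromBlocks_diag {N : Type*} [Fintype N] {A B : Matrix N N ℂ}
    (hA : A.PosSemidef) (hB : B.PosSemidef) :
    (Matrix.fromBlocks A 0 0 B).PosSemidef := by
  refine Matrix.PosSemidef.of_dotProduct_mulVec_nonneg ?_ ?_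
  · exact Matrix.isHermitian_fromBlocks_iff.mpr ⟨hA.1, by simp, by simp, hB.1⟩
  · intro x
    have hx : x = Sum.elim (x ∘ Sum.inl) (x ∘ Sum.inr) := (Sum.elim_comp_inl_inr x).symm
    rw [hx, Matrix.fromBlocks_mulVec]
    have hstar : star (Sum.elim (x ∘ Sum.inl) (x ∘ Sum.inr))
        = Sum.elim (star (x ∘ Sum.inl)) (star (x ∘ Sum.inr)) := by
      funext z; cases z <;> rfl
    rw [hstar, sumElim_dotProduct_sumElim]
    simp only [Matrix.zero_mulVec, add_zero, zero_add]
    exact add_nonneg (hA.dotProduct_mulVec_nonneg _) (hB.dotProduct_mulVec_nonneg _)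

end ChoiAux

/-- for CP maps `Φ, Ψ : M_m(ℂ) → M_n(ℂ)`, a linear map `Θ` makes the block map
`x ↦ [[Φ(x), Θ(x)],[Θ(x), Ψ(x)]]` completely positive iff the block matrix
`[[C_Φ, C_Θ],[C_Θ, C_Ψ]]` of Choi matrices is positive semidefinite; consequently the Choi
matrix of the geometric mean `Φ # Ψ` (the maximal such `Θ` in the CP order) is the matrix
geometric mean `C_Φ # C_Ψ`. -/
theorem choi_of_geom_mean {m n : Type*} [Fintype m] [DecidableEq m] [Fintype n] [DecidableEq n]
    (Φ Ψ : Matrix m m ℂ →ₗ[ℂ] Matrix n n ℂ) (hΦ : IsCP Φ) (hΨ : IsCP Ψ)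
    (G : Matrix m m ℂ →ₗ[ℂ] Matrix n n ℂ)
    (hGmem : IsCP (blockMap Φ G Ψ))
    (hGmax : ∀ Θ : Matrix m m ℂ →ₗ[ℂ] Matrix n n ℂ, IsCP (blockMap Φ Θ Ψ) → IsCP (G - Θ)) :
    (∀ Θ : Matrix m m ℂ →ₗ[ℂ] Matrix n n ℂ,
      IsCP (blockMap Φ Θ Ψ) ↔
        (Matrix.fromBlocks (choi Φ) (choi Θ) (choi Θ) (choi Ψ)).PosSemidef) ∧
      IsGeomMean (choi Φ) (choi Ψ) (choi G) := by
  have main : ∀ Θ : Matrix m m ℂ →ₗ[ℂ] Matrix n n ℂ,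
      IsCP (blockMap Φ Θ Ψ) ↔
        (Matrix.fromBlocks (choi Φ) (choi Θ) (choi Θ) (choi Ψ)).PosSemidef := by
    intro Θ
    rw [ChoiAux.choi_blockMap, Matrix.posSemidef_submatrix_equiv]
    exact ⟨fun h => ChoiAux.psd_of_cp _ h, fun h => ChoiAux.cp_of_psd _ h⟩
  refine ⟨main, ?_, (main G).mp hGmem, ?_⟩
  · have h0 : IsCP (blockMap Φ 0 Ψ) := (main 0).mpr (by
      rw [ChoiAux.choi_zero]
      exact ChoiAux.psd_fromBlocks_diag (ChoiAux.psd_of_cp _ hΦ) (ChoiAux.psd_of_cp _ hΨ))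
    have hG := hGmax 0 h0
    rw [sub_zero] at hG
    exact ChoiAux.psd_of_cp _ hG
  · intro X hX hbl
    have hX' : choi (ChoiAux.choiInv X) = X := ChoiAux.choi_choiInv X
    have hcp : IsCP (blockMap Φ (ChoiAux.choiInv X) Ψ) := (main _).mpr (by rw [hX']; exact hbl)
    have hfin := ChoiAux.psd_of_cp _ (hGmax _ hcp)
    rwa [ChoiAux.choi_sub, hX'] at hfin
end

section
/- Let φ, ψ be positive linear functionals on Mₙ(ℂ), given by φ(x) = Tr(ρx) and ψ(x) = Tr(σx) with ρ, σ positive semidefinite. Viewing φ, ψ as CP maps Mₙ(ℂ) → ℂ, their Choi matrices are ρᵀ and σᵀ respectively, and the geometric mean satisfies (φ # ψ)(x) = Tr((ρ # σ)x), i.e. the density matrix of the geometric mean of the functionals is the matrix geometric mean of the density matrices. -/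
open scoped ComplexOrder
open Matrix

lemma psd_antisymm {N : Type*} [Fintype N] [DecidableEq N] {A : Matrix N N ℂ}
    (h1 : A.PosSemidef) (h2 : (-A).PosSemidef) : A = 0 := by
  have hz : ∀ x : N → ℂ, A.mulVec x = 0 := by
    intro x
    rw [← h1.dotProduct_mulVec_zero_iff]
    have p1 := h1.dotProduct_mulVec_nonneg x
    have p2 := h2.dotProduct_mulVec_nonneg x
    rw [Matrix.neg_mulVec, dotProduct_neg] at p2
    exact le_antisymm (neg_nonneg.mp p2) p1
  ext i j
  have := congrFun (hz (Pi.single j 1)) i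
  simpa using this

lemma IsGeomMean.transpose {N : Type*} [Fintype N] [DecidableEq N] {A B G : Matrix N N ℂ}
    (h : IsGeomMean A B G) : IsGeomMean Aᵀ Bᵀ Gᵀ := by
  obtain ⟨hG, hblk, hmax⟩ := h
  refine ⟨hG.transpose, ?_, ?_⟩
  · have := hblk.transpose
    rwa [Matrix.fromBlocks_transpose] at this
  · intro X hX hXblk
    have hX' : (G - Xᵀ).PosSemidef := by
      apply hmax Xᵀ hX.transpose
      have := hXblk.transpose
      rwa [Matrix.fromBlocks_transpose] at this
    have := hX'.transpose
    rwa [Matrix.transpose_sub, Matrix.transpose_transpose] at this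

lemma isGeomMean_unique {N : Type*} [Fintype N] [DecidableEq N] {A B G G' : Matrix N N ℂ}
    (h : IsGeomMean A B G) (h' : IsGeomMean A B G') : G = G' := by
  have h1 := h.2.2 G' h'.1 h'.2.1
  have h2 := h'.2.2 G h.1 h.2.1
  have : G - G' = 0 := psd_antisymm h1 (by rwa [neg_sub])
  exact sub_eq_zero.mp this

/-- for positive functionals `φ(x) = Tr(ρx)`, `ψ(x) = Tr(σx)` on `M_n(ℂ)`,
the Choi matrices `C_φ(i,j) = φ(e_{ij})` and `C_ψ` equal `ρᵀ` and `σᵀ`, the geometric mean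
of the Choi matrices is `(ρ # σ)ᵀ`, and the geometric mean functional satisfies
`(φ # ψ)(x) = Tr((ρ # σ) x)`. -/
theorem geom_mean_of_positive_functionals {n : Type*} [Fintype n] [DecidableEq n]
    (ρ σ : Matrix n n ℂ) (hρ : ρ.PosSemidef) (hσ : σ.PosSemidef)
    (Cφ Cψ : Matrix n n ℂ)
    (hCφ : Cφ = Matrix.of fun i j => (ρ * Matrix.single i j (1 : ℂ)).trace)
    (hCψ : Cψ = Matrix.of fun i j => (σ * Matrix.single i j (1 : ℂ)).trace)
    (G Gc : Matrix n n ℂ) (hG : IsGeomMean ρ σ G) (hGc : IsGeomMean Cφ Cψ Gc) :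
    Cφ = ρ.transpose ∧ Cψ = σ.transpose ∧ Gc = G.transpose ∧
      ∀ x : Matrix n n ℂ, (Gc.transpose * x).trace = (G * x).trace := by
  have key : ∀ τ : Matrix n n ℂ, (Matrix.of fun i j => (τ * Matrix.single i j (1 : ℂ)).trace) = τᵀ := by
    intro τ
    ext i j
    simp [Matrix.trace, Matrix.diag, Matrix.mul_apply, Matrix.single, Finset.sum_ite_eq, ite_and, Finset.sum_ite_eq']
  have h1 : Cφ = ρᵀ := by rw [hCφ, key]
  have h2 : Cψ = σᵀ := by rw [hCψ, key]
  have h3 : Gc = Gᵀ := by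
    apply isGeomMean_unique hGc
    rw [h1, h2]
    exact hG.transpose
  refine ⟨h1, h2, h3, fun x => ?_⟩
  rw [h3, Matrix.transpose_transpose]
end

section
/- For an isometry V : H → K and positive operators A, B on H, the geometric mean satisfies (VAV*) # (VBV*) = V(A # B)V*. -/
/-- Positivity of the block operator `[[A, X],[X, B]]` on `H ⊕ H`, expressed via its
quadratic form. -/
def BlockPos {H : Type*} [NormedAddCommGroup H] [InnerProductSpace ℂ H]
    (A X B : H →L[ℂ] H) : Prop :=
  ∀ ξ η : H,
    0 ≤ ((inner ℂ (A ξ) ξ : ℂ) + (inner ℂ (X η) ξ : ℂ) + (inner ℂ (X ξ) η : ℂ) +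
      (inner ℂ (B η) η : ℂ)).re

/-- `G` is the operator geometric mean of positive operators `A` and `B`: the maximum
positive `X` with the block operator `[[A, X],[X, B]]` positive on `H ⊕ H`. -/
def IsOpGeomMean {H : Type*} [NormedAddCommGroup H] [InnerProductSpace ℂ H]
    [CompleteSpace H] (A B G : H →L[ℂ] H) : Prop :=
  G.IsPositive ∧ BlockPos A G B ∧
    ∀ X : H →L[ℂ] H, X.IsPositive → BlockPos A X B → (G - X).IsPositive

/-- for an isometry `V : H → K` (`V*V = I`) and positive operators `A, B`
on `H`, the geometric mean satisfies `(VAV*) # (VBV*) = V (A # B) V*`. -/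
theorem geom_mean_isometry_conj {H K : Type*}
    [NormedAddCommGroup H] [InnerProductSpace ℂ H] [CompleteSpace H]
    [NormedAddCommGroup K] [InnerProductSpace ℂ K] [CompleteSpace K]
    (V : H →L[ℂ] K)
    (hV : (ContinuousLinearMap.adjoint V).comp V = ContinuousLinearMap.id ℂ H)
    (A B G : H →L[ℂ] H) (hA : A.IsPositive) (hB : B.IsPositive)
    (hG : IsOpGeomMean A B G)
    (G' : K →L[ℂ] K)
    (hG' : IsOpGeomMean (V.comp (A.comp (ContinuousLinearMap.adjoint V)))
      (V.comp (B.comp (ContinuousLinearMap.adjoint V))) G') :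
    G' = V.comp (G.comp (ContinuousLinearMap.adjoint V)) := by
  set Vs := ContinuousLinearMap.adjoint V with hVsdef
  have hVV : ∀ x : H, Vs (V x) = x := fun x => by
    have := ContinuousLinearMap.ext_iff.mp hV x
    simpa using this
  -- basic inner product identities
  have keyR : ∀ (z : H) (ξ : K), (inner ℂ (V z) ξ : ℂ) = inner ℂ z (Vs ξ) :=
    fun z ξ => (ContinuousLinearMap.adjoint_inner_right V z ξ).symm
  have keyL : ∀ (w : K) (ξ : H), (inner ℂ (Vs w) ξ : ℂ) = inner ℂ w (V ξ) :=
    fun w ξ => ContinuousLinearMap.adjoint_inner_left V ξ w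
  have hinner : ∀ x y : H, (inner ℂ (V x) (V y) : ℂ) = inner ℂ x y := by
    intro x y; rw [keyR, hVV]
  -- self-adjointness of G'
  have hG'sa : ContinuousLinearMap.adjoint G' = G' :=
    ContinuousLinearMap.isSelfAdjoint_iff'.mp hG'.1.isSelfAdjoint
  have hG'symm : ∀ x y : K, (inner ℂ (G' x) y : ℂ) = inner ℂ x (G' y) := by
    intro x y
    conv_lhs => rw [← hG'sa]
    exact ContinuousLinearMap.adjoint_inner_left G' y x
  -- G' vanishes on the orthogonal complement of the range of V
  have hker : ∀ ξ : K, Vs ξ = 0 → G' ξ = 0 := by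
    intro ξ hξ
    have hz : ∀ η : K, (inner ℂ (G' ξ) η : ℂ) = 0 := by
      intro η
      by_contra hne
      set z : ℂ := inner ℂ (G' ξ) η with hzdef
      set b : ℂ := inner ℂ ((V.comp (B.comp Vs)) η) η with hbdef
      set t : ℝ := (|b.re| + 1) / (2 * Complex.normSq z) with htdef
      have hnz : Complex.normSq z ≠ 0 := by
        simpa [Complex.normSq_eq_zero] using hne
      have hnzpos : 0 < Complex.normSq z :=
        lt_of_le_of_ne (Complex.normSq_nonneg z) (Ne.symm hnz)
      have hbp := hG'.2.1 ((-(t : ℂ) * z) • ξ) η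
      have e1 : (inner ℂ ((V.comp (A.comp Vs)) ((-(t : ℂ) * z) • ξ))
          ((-(t : ℂ) * z) • ξ) : ℂ) = 0 := by
        simp [ContinuousLinearMap.comp_apply, map_smul, hξ]
      have e2 : (inner ℂ (G' η) ((-(t : ℂ) * z) • ξ) : ℂ)
          = (-(t : ℂ) * z) * (starRingEnd ℂ) z := by
        rw [inner_smul_right]
        congr 1
        rw [← inner_conj_symm, ← hG'symm, ← hzdef]
      have e3 : (inner ℂ (G' ((-(t : ℂ) * z) • ξ)) η : ℂ)
          = (starRingEnd ℂ) (-(t : ℂ) * z) * z := by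
        rw [map_smul, inner_smul_left, ← hzdef]
      rw [e1, e2, e3, ← hbdef] at hbp
      have hre : ((0 : ℂ) + (-(t : ℂ) * z) * (starRingEnd ℂ) z
            + (starRingEnd ℂ) (-(t : ℂ) * z) * z + b).re
          = -(2 * t * Complex.normSq z) + b.re := by
        simp only [Complex.add_re, Complex.mul_re, Complex.mul_im, Complex.neg_re,
          Complex.neg_im, Complex.ofReal_re, Complex.ofReal_im, Complex.conj_re,
          Complex.conj_im, Complex.zero_re, Complex.normSq_apply, map_mul]
        ring
      rw [hre] at hbp
      have ht : 2 * t * Complex.normSq z = |b.re| + 1 := by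
        rw [htdef]; field_simp
      rw [ht] at hbp
      have : b.re ≤ |b.re| := le_abs_self _
      linarith
    have := hz (G' ξ)
    rwa [inner_self_eq_zero] at this
  -- G' is supported on the range of V
  have hstep1 : ∀ k : K, G' (V (Vs k)) = G' k := by
    intro k
    have h0 : Vs (k - V (Vs k)) = 0 := by simp [map_sub, hVV]
    have h1 := hker _ h0
    rw [map_sub] at h1
    exact (sub_eq_zero.mp h1).symm
  have hstep2 : ∀ k : K, V (Vs (G' k)) = G' k := by
    intro k
    apply ext_inner_right ℂ
    intro y
    rw [keyR, keyL, hG'symm, hstep1 y, ← hG'symm]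
  -- the compression of G' to H
  set G₀ : H →L[ℂ] H := Vs.comp (G'.comp V) with hG₀def
  have hfix : V.comp (G₀.comp Vs) = G' := by
    ext k
    simp only [ContinuousLinearMap.comp_apply, hG₀def]
    rw [hstep1 k, hstep2 k]
  -- G₀ is positive
  have hG₀pos : G₀.IsPositive := by
    have := hG'.1.conj_adjoint Vs
    rwa [hVsdef, ContinuousLinearMap.adjoint_adjoint] at this
  -- BlockPos A G₀ B
  have hbp₀ : BlockPos A G₀ B := by
    intro ξ η
    have := hG'.2.1 (V ξ) (V η)
    simpa only [ContinuousLinearMap.comp_apply, hVV, hinner, ← keyL, hG₀def]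
      using this
  -- V G V* is positive
  have hVGVpos : (V.comp (G.comp Vs)).IsPositive := by
    have := hG.1.conj_adjoint V
    rwa [← hVsdef] at this
  -- BlockPos (VAV*) (VGV*) (VBV*)
  have hbpV : BlockPos (V.comp (A.comp Vs)) (V.comp (G.comp Vs))
      (V.comp (B.comp Vs)) := by
    intro ξ η
    have := hG.2.1 (Vs ξ) (Vs η)
    simpa only [ContinuousLinearMap.comp_apply, keyR] using this
  -- maximality in both directions
  have h1 : (G' - V.comp (G.comp Vs)).IsPositive :=
    hG'.2.2 _ hVGVpos hbpV
  have h2 : (G - G₀).IsPositive := hG.2.2 _ hG₀pos hbp₀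
  have h3 : (V.comp (G.comp Vs) - G').IsPositive := by
    have := h2.conj_adjoint V
    rw [← hVsdef] at this
    have heq : V ∘L (G - G₀) ∘L Vs = V.comp (G.comp Vs) - G' := by
      rw [← hfix]
      ext k
      simp [ContinuousLinearMap.comp_apply, map_sub]
    rwa [heq] at this
  -- a positive operator whose negative is positive is zero
  have hzero : ∀ x : K, (inner ℂ ((G' - V.comp (G.comp Vs)) x) x : ℂ) = 0 := by
    intro x
    set X : K →L[ℂ] K := G' - V.comp (G.comp Vs) with hXdef
    have hXsa : ContinuousLinearMap.adjoint X = X :=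
      ContinuousLinearMap.isSelfAdjoint_iff'.mp h1.isSelfAdjoint
    have hr1 : 0 ≤ (inner ℂ (X x) x : ℂ).re := by
      have := h1.2 x
      simpa [ContinuousLinearMap.reApplyInnerSelf_apply] using this
    have hr2 : (inner ℂ (X x) x : ℂ).re ≤ 0 := by
      have := h3.2 x
      have hneg : V.comp (G.comp Vs) - G' = -X := by rw [hXdef]; abel
      rw [hneg] at this
      have : 0 ≤ (inner ℂ ((-X) x) x : ℂ).re := by
        simpa [ContinuousLinearMap.reApplyInnerSelf_apply] using this
      simpa [inner_neg_left] using this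
    have hre : (inner ℂ (X x) x : ℂ).re = 0 := le_antisymm hr2 hr1
    have him : (inner ℂ (X x) x : ℂ).im = 0 := by
      have hconj : (starRingEnd ℂ) (inner ℂ (X x) x : ℂ) = inner ℂ (X x) x := by
        rw [inner_conj_symm]
        conv_lhs => rw [← hXsa]
        exact (ContinuousLinearMap.adjoint_inner_right X x x)
      have := (Complex.conj_eq_iff_im).mp hconj
      exact this
    exact Complex.ext hre him
  have hX0 : G' - V.comp (G.comp Vs) = 0 := by
    have := (inner_map_self_eq_zero
      ((G' - V.comp (G.comp Vs)) : K →ₗ[ℂ] K)).mp (fun x => hzero x)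
    ext k
    have := LinearMap.ext_iff.mp this k
    simpa using this
  exact sub_eq_zero.mp hX0
end

section
/- Let ρ be a positive definite n×n diagonal matrix and C = vv* with v = Σᵢ eᵢ ⊗ eᵢ ∈ ℂⁿ ⊗ ℂⁿ, and let 𝛒 = ⊕ₖ ρₖ Iₙ be the n²×n² diagonal matrix. Then the matrix geometric mean satisfies C # 𝛒 = (Σᵢ ρᵢ⁻¹)^{−1/2} · C. -/
open scoped ComplexOrder

open Matrix in
lemma aux_smul_psd {N : Type*} [Fintype N] {M : Matrix N N ℂ} (hM : M.PosSemidef) {r : ℝ}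
    (hr : 0 ≤ r) : (((r : ℝ) : ℂ) • M).PosSemidef := by
  apply Matrix.PosSemidef.of_dotProduct_mulVec_nonneg
  · rw [Matrix.IsHermitian, conjTranspose_smul, hM.1.eq]
    congr 1
    simp
  · intro x
    rw [smul_mulVec, dotProduct_smul]
    have h := hM.dotProduct_mulVec_nonneg x
    rw [Complex.nonneg_iff] at h ⊢
    constructor
    · simp only [smul_eq_mul, Complex.mul_re, Complex.ofReal_re, Complex.ofReal_im, zero_mul,
        sub_zero]
      exact mul_nonneg hr h.1
    · simp [Complex.mul_im, ← h.2]

open Matrix in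
lemma aux_psd_antisymm {N : Type*} [Fintype N] [DecidableEq N] {A B : Matrix N N ℂ}
    (h1 : (A - B).PosSemidef) (h2 : (B - A).PosSemidef) : A = B := by
  have hz : ∀ x, (A - B) *ᵥ x = 0 := by
    intro x
    rw [← h1.dotProduct_mulVec_zero_iff x]
    have ha := h1.dotProduct_mulVec_nonneg x
    have hb := h2.dotProduct_mulVec_nonneg x
    rw [show B - A = -(A - B) by rw [neg_sub], neg_mulVec, dotProduct_neg] at hb
    exact le_antisymm (neg_nonneg.mp hb) ha
  have h0 : A - B = 0 := by
    ext i j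
    have := congrFun (hz (Pi.single j 1)) i
    simpa [mulVec_single] using this
  exact sub_eq_zero.mp h0

/-- let `C = vv*` with `v = Σᵢ eᵢ⊗eᵢ ∈ ℂⁿ⊗ℂⁿ` and let `𝛒 = ⊕ₖ ρₖ Iₙ` be the
`n²×n²` diagonal matrix built from a positive definite diagonal `ρ`. Then the matrix
geometric mean satisfies `C # 𝛒 = (Σᵢ ρᵢ⁻¹)^{-1/2} · C`. -/
theorem geom_mean_rank_one_with_diagonal {n : ℕ} (hn : 0 < n)
    (ρ : Fin n → ℝ) (hρ : ∀ i, 0 < ρ i)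
    (v : Fin n × Fin n → ℂ) (hv : v = fun p => if p.1 = p.2 then 1 else 0)
    (C D G : Matrix (Fin n × Fin n) (Fin n × Fin n) ℂ)
    (hC : C = Matrix.vecMulVec v (star v))
    (hD : D = Matrix.diagonal fun p => (ρ p.1 : ℂ))
    (hG : IsGeomMean C D G) :
    G = (((Real.sqrt (∑ i, (ρ i)⁻¹))⁻¹ : ℝ) : ℂ) • C := by
  open Matrix in
  -- abbreviations
  set sR : ℝ := ∑ i, (ρ i)⁻¹ with hsR
  have hs : 0 < sR := Finset.sum_pos (fun i _ => inv_pos.mpr (hρ i))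
    ⟨⟨0, hn⟩, Finset.mem_univ _⟩
  set c : ℝ := (Real.sqrt sR)⁻¹ with hcdef
  have hc : 0 < c := inv_pos.mpr (Real.sqrt_pos.mpr hs)
  have hc2 : c ^ 2 = sR⁻¹ := by
    rw [hcdef, ← Real.sq_sqrt hs.le]
    simp [pow_two, mul_inv]
  -- basic matrix facts
  have hCapp : ∀ p q, C p q = if p.1 = p.2 ∧ q.1 = q.2 then 1 else 0 := by
    intro p q
    rw [hC, hv]
    simp only [Matrix.vecMulVec_apply, Pi.star_apply]
    split_ifs with h1 h2 h3 h4 <;> simp_all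
  have hCps : C.PosSemidef := by
    rw [hC, Matrix.vecMulVec_eq Unit, ← Matrix.conjTranspose_replicateCol]
    exact Matrix.posSemidef_self_mul_conjTranspose _
  have hDpd : D.PosDef := by
    rw [hD]
    exact Matrix.posDef_diagonal_iff.mpr fun p => Complex.zero_lt_real.mpr (hρ p.1)
  haveI : Invertible D := D.invertibleOfIsUnitDet hDpd.det_pos.ne'.isUnit
  have hDinv : D⁻¹ = Matrix.diagonal fun p => (((ρ p.1)⁻¹ : ℝ) : ℂ) := by
    apply Matrix.inv_eq_right_inv
    rw [hD, Matrix.diagonal_mul_diagonal]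
    convert Matrix.diagonal_one
    rename_i p
    rw [← Complex.ofReal_mul, mul_inv_cancel₀ (hρ p.1).ne', Complex.ofReal_one]
  have hDinvpd : D⁻¹.PosDef := by
    rw [hDinv]
    exact Matrix.posDef_diagonal_iff.mpr fun p =>
      Complex.zero_lt_real.mpr (inv_pos.mpr (hρ p.1))
  have hCDC : C * D⁻¹ * C = ((sR : ℝ) : ℂ) • C := by
    rw [hDinv, hC, hv]
    ext i j
    simp only [Matrix.mul_apply, Matrix.mul_diagonal, Matrix.vecMulVec_apply, Matrix.smul_apply,
      Pi.star_apply, smul_eq_mul]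
    by_cases hi : i.1 = i.2 <;> by_cases hj : j.1 = j.2 <;>
      simp [hi, hj, apply_ite, Fintype.sum_prod_type, Finset.sum_ite_eq, mul_comm,
        Matrix.diagonal_apply, Prod.ext_iff, ite_and, hsR]
  have hCmv : ∀ x, C *ᵥ x = (star v ⬝ᵥ x) • v := by
    intro x
    rw [hC]
    ext i
    simp only [Matrix.mulVec, Matrix.vecMulVec_apply, dotProduct, Pi.smul_apply,
      smul_eq_mul, Finset.sum_mul, Pi.star_apply]
    refine Finset.sum_congr rfl fun j _ => by ring
  have hvv : star v ⬝ᵥ v = ((n : ℝ) : ℂ) := by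
    rw [hv]
    simp [dotProduct, Fintype.sum_prod_type, apply_ite, Finset.sum_ite_eq]
  -- quadratic form of C
  have hCquad : ∀ w, star w ⬝ᵥ C *ᵥ w = (star v ⬝ᵥ w) * (star w ⬝ᵥ v) := by
    intro w
    rw [hCmv, dotProduct_smul, smul_eq_mul]
  -- block PSD for the candidate
  have hcCps : (((c : ℝ) : ℂ) • C).PosSemidef := aux_smul_psd hCps hc.le
  have hblock : (Matrix.fromBlocks C (((c : ℝ) : ℂ) • C) (((c : ℝ) : ℂ) • C) D).PosSemidef := by
    rw [show Matrix.fromBlocks C (((c:ℝ):ℂ) • C) (((c:ℝ):ℂ) • C) D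
        = Matrix.fromBlocks C (((c:ℝ):ℂ) • C) (((c:ℝ):ℂ) • C)ᴴ D by rw [hcCps.1.eq],
      Matrix.PosDef.fromBlocks₂₂ _ _ hDpd]
    have hzero : C - ((c:ℝ):ℂ) • C * D⁻¹ * (((c:ℝ):ℂ) • C)ᴴ = 0 := by
      have hone : ((c:ℝ):ℂ) * ((c:ℝ):ℂ) * ((sR:ℝ):ℂ) = 1 := by
        rw [← Complex.ofReal_mul, ← Complex.ofReal_mul, show c * c * sR = 1 by
          rw [show c * c = c ^ 2 by ring, hc2, inv_mul_cancel₀ hs.ne'], Complex.ofReal_one]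
      rw [hcCps.1.eq, Matrix.smul_mul, Matrix.smul_mul, Matrix.mul_smul, hCDC,
        smul_smul, smul_smul, sub_eq_zero, hone, one_smul]
    rw [hzero]
    exact Matrix.PosSemidef.zero
  -- maximality
  have hmax : ∀ X : Matrix (Fin n × Fin n) (Fin n × Fin n) ℂ, X.PosSemidef →
      (Matrix.fromBlocks C X X D).PosSemidef → ((((c:ℝ):ℂ) • C) - X).PosSemidef := by
    intro X hX hbX
    have hXh : Xᴴ = X := hX.1.eq
    rw [show Matrix.fromBlocks C X X D = Matrix.fromBlocks C X Xᴴ D by rw [hXh],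
      Matrix.PosDef.fromBlocks₂₂ _ _ hDpd, hXh] at hbX
    -- kernel property
    have hker : ∀ w, star v ⬝ᵥ w = 0 → X *ᵥ w = 0 := by
      intro w hw
      have h0 := hbX.dotProduct_mulVec_nonneg w
      rw [Matrix.sub_mulVec, dotProduct_sub, hCquad, hw, zero_mul, zero_sub] at h0
      have hq : star w ⬝ᵥ (X * D⁻¹ * X) *ᵥ w = star (X *ᵥ w) ⬝ᵥ D⁻¹ *ᵥ (X *ᵥ w) := by
        rw [← Matrix.mulVec_mulVec, ← Matrix.mulVec_mulVec, Matrix.dotProduct_mulVec,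
          Matrix.star_mulVec, hXh]
      rw [hq] at h0
      by_contra hy
      have hpos := hDinvpd.dotProduct_mulVec_pos hy
      have : (0 : ℂ) < 0 := lt_of_lt_of_le hpos (by linarith [neg_nonneg.mp h0])
      exact lt_irrefl _ this
    -- column structure
    have hsingle : ∀ q : Fin n × Fin n, star v ⬝ᵥ Pi.single q (1:ℂ) = star (v q) := by
      intro q
      simp [dotProduct, Pi.single_apply, apply_ite, Finset.sum_ite_eq]
    have hcol : ∀ q : Fin n × Fin n, q.1 ≠ q.2 → ∀ p, X p q = 0 := by
      intro q hq p
      have h := hker (Pi.single q 1) (by rw [hsingle, hv]; simp [hq])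
      have := congrFun h p
      simpa [Matrix.mulVec_single] using this
    have hcoleq : ∀ p q : Fin n × Fin n, p.1 = p.2 → q.1 = q.2 → ∀ r, X r p = X r q := by
      intro p q hp hq r
      have h := hker (Pi.single p 1 - Pi.single q 1) (by
        rw [dotProduct_sub, hsingle, hsingle, hv]
        simp [hp, hq])
      have h2 := congrFun h r
      rw [Matrix.mulVec_sub] at h2
      simpa [Matrix.mulVec_single, sub_eq_zero] using h2
    set d0 : Fin n × Fin n := (⟨0, hn⟩, ⟨0, hn⟩) with hd0
    have hd0diag : d0.1 = d0.2 := rfl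
    have hquad_single : star (Pi.single d0 (1:ℂ)) ⬝ᵥ X *ᵥ Pi.single d0 1 = X d0 d0 := by
      simp [Matrix.mulVec_single, dotProduct, Pi.single_apply, apply_ite,
        Finset.sum_ite_eq]
    have hτ : 0 ≤ X d0 d0 := by
      have := hX.dotProduct_mulVec_nonneg (Pi.single d0 1)
      rwa [hquad_single] at this
    set t : ℝ := (X d0 d0).re with htdef
    have ht0 : 0 ≤ t := (Complex.nonneg_iff.mp hτ).1
    have hτeq : X d0 d0 = ((t : ℝ) : ℂ) := by
      apply Complex.ext
      · simp [htdef]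
      · simp [htdef, ← (Complex.nonneg_iff.mp hτ).2]
    have hXC : X = ((t : ℝ) : ℂ) • C := by
      ext p q
      rw [Matrix.smul_apply, hCapp, smul_eq_mul]
      by_cases hq : q.1 = q.2
      · by_cases hp : p.1 = p.2
        · rw [if_pos ⟨hp, hq⟩, mul_one]
          calc X p q = X p d0 := hcoleq q d0 hq hd0diag p
            _ = star (X d0 p) := (hX.1.apply p d0).symm ▸ rfl
            _ = star (X d0 d0) := by rw [hcoleq p d0 hp hd0diag d0]
            _ = ((t : ℝ) : ℂ) := by rw [hτeq, Complex.star_def, Complex.conj_ofReal]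
        · rw [if_neg (by simp [hp]), mul_zero]
          calc X p q = X p d0 := hcoleq q d0 hq hd0diag p
            _ = star (X d0 p) := (hX.1.apply p d0).symm ▸ rfl
            _ = 0 := by rw [hcol p hp d0, star_zero]
      · rw [if_neg (by simp [hq]), mul_zero]
        exact hcol q hq p
    -- the scalar inequality
    have hineq : t ^ 2 * sR ≤ 1 := by
      have h0 := hbX.dotProduct_mulVec_nonneg v
      have hm : (((t:ℝ):ℂ) • C) * D⁻¹ * (((t:ℝ):ℂ) • C) = (((t^2 * sR : ℝ)):ℂ) • C := by
        rw [Matrix.smul_mul, Matrix.smul_mul, Matrix.mul_smul, hCDC, smul_smul, smul_smul]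
        congr 1
        push_cast
        ring
      rw [hXC, hm, Matrix.sub_mulVec, dotProduct_sub, Matrix.smul_mulVec,
        dotProduct_smul, hCquad, hvv] at h0
      simp only [smul_eq_mul] at h0
      have h1 : (0:ℂ) ≤ (((n:ℝ)^2 - t^2*sR*(n:ℝ)^2 : ℝ) : ℂ) := by
        convert h0 using 1
        push_cast
        ring
      rw [Complex.zero_le_real] at h1
      have hn2 : (0:ℝ) < (n:ℝ)^2 := by positivity
      nlinarith
    have htc : t ≤ c := by
      have hcs : c ^ 2 * sR = 1 := by rw [hc2, inv_mul_cancel₀ hs.ne']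
      have ht2 : t ^ 2 ≤ c ^ 2 := le_of_mul_le_mul_right (by rw [hcs]; exact hineq) hs
      have := Real.sqrt_le_sqrt ht2
      rwa [Real.sqrt_sq ht0, Real.sqrt_sq hc.le] at this
    rw [hXC, show (((c:ℝ):ℂ) • C - ((t:ℝ):ℂ) • C) = (((c - t : ℝ)):ℂ) • C by
      rw [← sub_smul, Complex.ofReal_sub]]
    exact aux_smul_psd hCps (by linarith)
  -- conclude
  have hGm : IsGeomMean C D (((c:ℝ):ℂ) • C) := ⟨hcCps, hblock, hmax⟩
  have h1 := hG.2.2 _ hGm.1 hGm.2.1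
  have h2 := hGm.2.2 _ hG.1 hG.2.1
  exact (aux_psd_antisymm h1 h2).symm ▸ rfl
end
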